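/- (Covering by intervals with non-negligible centers.) Let μ be a Radon measure on ℝ and U ⊆ ℝ open. For every r_0 > 0 and every positive integer n there is a sequence of closed intervals [x_j − r_j, x_j + r_j] contained in U with pairwise disjoint interiors such that: r_j ≤ r_0 for all j; μ(⋃_j [x_j − (8n)^{-1} r_j, x_j + (8n)^{-1} r_j]) ≥ (1/16) n^{-1} μ(⋃_j [x_j − r_j, x_j + r_j]); and μ(U \ ⋃_j [x_j − r_j, x_j + r_j]) = 0. -/

import Mathlib

open MeasureTheory ENNReal Metric Set Filter

/-- The set of points around which the central portions are always negligible is null. -/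
lemma bad_null (μ : Measure ℝ) [IsLocallyFiniteMeasure μ] {τ : ℝ} (hτ0 : 0 < τ) (hτ1 : τ < 1)
    {c : ℝ≥0∞} (hc : c ≤ ENNReal.ofReal (τ * 2⁻¹)) :
    μ {x : ℝ | ∃ ε > 0, ∀ r : ℝ, 0 < r → r ≤ ε →
        μ (closedBall x (τ * r)) < c * μ (closedBall x r)} = 0 := by
  set A := {x : ℝ | ∃ ε > 0, ∀ r : ℝ, 0 < r → r ≤ ε →
      μ (closedBall x (τ * r)) < c * μ (closedBall x r)} with hA
  -- the auxiliary pieces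
  set B : ℕ → Set ℝ := fun m => {x : ℝ | x ∈ ball (0:ℝ) m ∧
      μ (closedBall x ((m:ℝ)+1)⁻¹) ≤ m ∧
      ∀ r : ℝ, 0 < r → r ≤ ((m:ℝ)+1)⁻¹ →
        μ (closedBall x (τ * r)) < c * μ (closedBall x r)} with hB
  have hsub : A ⊆ ⋃ m : ℕ, B m := by
    rintro x ⟨ε, hε, hx⟩
    have hfin : μ (closedBall x 1) ≠ ⊤ :=
      (isCompact_closedBall x 1).measure_lt_top.ne
    obtain ⟨m, hm⟩ := exists_nat_gt (max |x| (max ε⁻¹ (μ (closedBall x 1)).toReal))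
    have hm1 : |x| < m := (le_max_left _ _).trans_lt hm
    have hm2 : ε⁻¹ < m := ((le_max_left _ _).trans (le_max_right _ _)).trans_lt hm
    have hm3 : (μ (closedBall x 1)).toReal < m :=
      ((le_max_right _ _).trans (le_max_right _ _)).trans_lt hm
    have hminv : ((m:ℝ)+1)⁻¹ ≤ ε := by
      rw [inv_le_comm₀ (by positivity) hε]
      exact le_of_lt (hm2.trans (by linarith))
    have hminv1 : ((m:ℝ)+1)⁻¹ ≤ 1 := by
      rw [inv_le_one_iff₀]; right; linarith [Nat.cast_nonneg (α := ℝ) m]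
    refine mem_iUnion.2 ⟨m, ?_, ?_, fun r hr hr' => hx r hr (hr'.trans hminv)⟩
    · simpa [Real.ball_eq_Ioo, abs_lt] using abs_lt.1 hm1
    · calc μ (closedBall x ((m:ℝ)+1)⁻¹) ≤ μ (closedBall x 1) :=
            measure_mono (closedBall_subset_closedBall hminv1)
        _ ≤ (m : ℝ≥0∞) := by
            rw [← ENNReal.ofReal_toReal hfin, ← ENNReal.ofReal_natCast]
            exact ENNReal.ofReal_le_ofReal hm3.le
  refine measure_mono_null hsub (measure_iUnion_null fun m => ?_)
  -- each B m is null
  have key : ∀ η : ℝ≥0∞, η ≠ 0 → μ (B m) ≤ η * ENNReal.ofReal (2 * ((m:ℝ)+2)) := by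
    intro η hη
    -- iteration
    have iter : ∀ x ∈ B m, ∀ k : ℕ,
        μ (closedBall x (τ ^ k * ((m:ℝ)+1)⁻¹)) ≤ c ^ k * μ (closedBall x ((m:ℝ)+1)⁻¹) := by
      intro x hx k
      induction k with
      | zero => simp
      | succ k ih =>
        have h1 : (0:ℝ) < τ ^ k * ((m:ℝ)+1)⁻¹ := by positivity
        have h2 : τ ^ k * ((m:ℝ)+1)⁻¹ ≤ ((m:ℝ)+1)⁻¹ := by
          have := pow_le_one₀ hτ0.le hτ1.le (n := k)
          nlinarith [inv_pos.2 (show (0:ℝ) < (m:ℝ)+1 by positivity)]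
        calc μ (closedBall x (τ ^ (k+1) * ((m:ℝ)+1)⁻¹))
            = μ (closedBall x (τ * (τ ^ k * ((m:ℝ)+1)⁻¹))) := by ring_nf
          _ ≤ c * μ (closedBall x (τ ^ k * ((m:ℝ)+1)⁻¹)) := (hx.2.2 _ h1 h2).le
          _ ≤ c * (c ^ k * μ (closedBall x ((m:ℝ)+1)⁻¹)) := mul_le_mul_right ih c
          _ = c ^ (k+1) * μ (closedBall x ((m:ℝ)+1)⁻¹) := by rw [pow_succ]; ring
    -- admissible radii
    set f : ℝ → Set ℝ := fun x =>
      {r | 0 < r ∧ r ≤ ((m:ℝ)+1)⁻¹ ∧ μ (closedBall x r) ≤ η * ENNReal.ofReal r} with hf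
    have hfx : ∀ x ∈ B m, ∀ δ > 0, (f x ∩ Set.Ioo 0 δ).Nonempty := by
      intro x hx δ hδ
      have t1 : Tendsto (fun k : ℕ => ENNReal.ofReal ((2⁻¹:ℝ) ^ k) *
          ((m:ℝ≥0∞) * ENNReal.ofReal ((m:ℝ)+1))) atTop (nhds 0) := by
        have : Tendsto (fun k : ℕ => ENNReal.ofReal ((2⁻¹:ℝ) ^ k)) atTop (nhds 0) := by
          have h := tendsto_pow_atTop_nhds_zero_of_lt_one (by norm_num : (0:ℝ) ≤ 2⁻¹)
            (by norm_num : (2⁻¹:ℝ) < 1)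
          simpa using (ENNReal.tendsto_ofReal h)
        simpa using ENNReal.Tendsto.mul_const this
          (Or.inr (ENNReal.mul_ne_top (ENNReal.natCast_ne_top m) ENNReal.ofReal_ne_top))
      have t2 : Tendsto (fun k : ℕ => τ ^ k * ((m:ℝ)+1)⁻¹) atTop (nhds 0) := by
        have h := tendsto_pow_atTop_nhds_zero_of_lt_one hτ0.le hτ1
        simpa using h.mul_const (((m:ℝ)+1)⁻¹)
      have e1 := t1.eventually (gt_mem_nhds (pos_iff_ne_zero.2 hη))
      have e2 := t2.eventually (gt_mem_nhds hδ)
      obtain ⟨k, hk1, hk2⟩ := (e1.and e2).exists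
      have hrpos : (0:ℝ) < τ ^ k * ((m:ℝ)+1)⁻¹ := by positivity
      have hrle : τ ^ k * ((m:ℝ)+1)⁻¹ ≤ ((m:ℝ)+1)⁻¹ := by
        have := pow_le_one₀ hτ0.le hτ1.le (n := k)
        nlinarith [inv_pos.2 (show (0:ℝ) < (m:ℝ)+1 by positivity)]
      refine ⟨τ ^ k * ((m:ℝ)+1)⁻¹, ⟨hrpos, hrle, ?_⟩, hrpos, hk2⟩
      -- measure bound at this radius
      calc μ (closedBall x (τ ^ k * ((m:ℝ)+1)⁻¹))
          ≤ c ^ k * μ (closedBall x ((m:ℝ)+1)⁻¹) := iter x hx k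
        _ ≤ c ^ k * m := mul_le_mul_right hx.2.1 _
        _ ≤ (ENNReal.ofReal (τ * 2⁻¹)) ^ k * m := mul_le_mul_left (pow_le_pow_left' hc k) _
        _ = ENNReal.ofReal (τ ^ k) * (ENNReal.ofReal ((2⁻¹:ℝ) ^ k) * m) := by
            rw [← ENNReal.ofReal_pow (by positivity), mul_pow,
              ENNReal.ofReal_mul (by positivity), mul_assoc]
        _ ≤ ENNReal.ofReal (τ ^ k) * (η * ENNReal.ofReal (((m:ℝ)+1)⁻¹)) := by
            refine mul_le_mul_right ?_ _
            have hmul : ENNReal.ofReal (((m:ℝ)+1)) * ENNReal.ofReal (((m:ℝ)+1)⁻¹) = 1 := by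
              rw [← ENNReal.ofReal_mul (by positivity)]
              rw [mul_inv_cancel₀ (by positivity : ((m:ℝ)+1) ≠ 0), ENNReal.ofReal_one]
            calc ENNReal.ofReal ((2⁻¹:ℝ) ^ k) * (m:ℝ≥0∞)
                = ENNReal.ofReal ((2⁻¹:ℝ) ^ k) * ((m:ℝ≥0∞) * ENNReal.ofReal ((m:ℝ)+1)) *
                    ENNReal.ofReal (((m:ℝ)+1)⁻¹) := by
                  rw [mul_assoc, mul_assoc, hmul, mul_one]
              _ ≤ η * ENNReal.ofReal (((m:ℝ)+1)⁻¹) := mul_le_mul_left hk1.le _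
        _ = η * ENNReal.ofReal (τ ^ k * ((m:ℝ)+1)⁻¹) := by
            rw [ENNReal.ofReal_mul (by positivity)]; ring
    obtain ⟨t, r, t_count, t_sub, hrr, hcov, t_disj⟩ :=
      Besicovitch.exists_disjoint_closedBall_covering_ae μ f (B m) hfx (fun _ => 1)
        (fun _ _ => one_pos)
    have hmeas : μ (B m) ≤ ∑' x : t, μ (closedBall (x:ℝ) (r x)) := by
      calc μ (B m)
          ≤ μ ((B m \ ⋃ x ∈ t, closedBall x (r x)) ∪ ⋃ x ∈ t, closedBall x (r x)) :=
            measure_mono (Set.subset_diff_union _ _)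
        _ ≤ μ (B m \ ⋃ x ∈ t, closedBall x (r x)) + μ (⋃ x ∈ t, closedBall x (r x)) :=
            measure_union_le _ _
        _ = μ (⋃ x ∈ t, closedBall x (r x)) := by rw [hcov, zero_add]
        _ ≤ ∑' x : t, μ (closedBall (x:ℝ) (r x)) := measure_biUnion_le μ t_count _
    have hvol : (∑' x : t, ENNReal.ofReal (r x)) ≤ ENNReal.ofReal (2 * ((m:ℝ)+2)) := by
      calc (∑' x : t, ENNReal.ofReal (r x))
          ≤ ∑' x : t, volume (closedBall (x:ℝ) (r x)) := by
            refine ENNReal.tsum_le_tsum fun x => ?_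
            rw [Real.volume_closedBall]
            exact ENNReal.ofReal_le_ofReal (by linarith [((hrr x x.2).1).1.le])
        _ = volume (⋃ x ∈ t, closedBall (x:ℝ) (r x)) :=
            (measure_biUnion t_count t_disj fun x _ => measurableSet_closedBall).symm
        _ ≤ volume (closedBall (0:ℝ) ((m:ℝ)+2)) := by
            refine measure_mono (Set.iUnion₂_subset fun x hx => ?_)
            have h1 : |x| < m := by
              have := (t_sub hx).1; simpa [Real.ball_eq_Ioo, abs_lt] using this
            have h2 : r x ≤ 1 := by
              have := (hrr x hx).1.2.1
              have : r x ≤ ((m:ℝ)+1)⁻¹ := this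
              have h3 : ((m:ℝ)+1)⁻¹ ≤ 1 := by
                rw [inv_le_one_iff₀]; right; linarith [Nat.cast_nonneg (α := ℝ) m]
              linarith
            intro y hy
            simp only [mem_closedBall, Real.dist_eq] at hy ⊢
            have := abs_lt.1 h1
            cases abs_le.1 hy with
            | intro a b => rw [abs_le]; constructor <;> linarith
        _ = ENNReal.ofReal (2 * ((m:ℝ)+2)) := by
            rw [Real.volume_closedBall]
    calc μ (B m) ≤ ∑' x : t, μ (closedBall (x:ℝ) (r x)) := hmeas
      _ ≤ ∑' x : t, η * ENNReal.ofReal (r x) :=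
          ENNReal.tsum_le_tsum fun x => (hrr x x.2).1.2.2
      _ = η * ∑' x : t, ENNReal.ofReal (r x) := ENNReal.tsum_mul_left
      _ ≤ η * ENNReal.ofReal (2 * ((m:ℝ)+2)) := mul_le_mul_right hvol _
  -- conclude
  have hlim : Tendsto (fun j : ℕ => ((j:ℝ≥0∞))⁻¹ * ENNReal.ofReal (2 * ((m:ℝ)+2)))
      atTop (nhds 0) := by
    simpa only [zero_mul] using ENNReal.Tendsto.mul_const ENNReal.tendsto_inv_nat_nhds_zero
      (Or.inr ENNReal.ofReal_ne_top)
  have hle : ∀ j : ℕ, μ (B m) ≤ ((j:ℝ≥0∞))⁻¹ * ENNReal.ofReal (2 * ((m:ℝ)+2)) := by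
    intro j
    exact key _ (by simp)
  exact le_antisymm (ge_of_tendsto' hlim hle) zero_le
theorem stmt_7 (μ : Measure ℝ) [IsLocallyFiniteMeasure μ]
    (U : Set ℝ) (hU : IsOpen U) (r₀ : ℝ) (hr₀ : 0 < r₀) (n : ℕ) (hn : 0 < n) :
    ∃ J : Set (ℝ × ℝ), J.Countable ∧
      (∀ p ∈ J, 0 < p.2 ∧ p.2 ≤ r₀ ∧ Set.Icc (p.1 - p.2) (p.1 + p.2) ⊆ U) ∧
      (J.Pairwise fun p q =>
        Disjoint (Set.Ioo (p.1 - p.2) (p.1 + p.2)) (Set.Ioo (q.1 - q.2) (q.1 + q.2))) ∧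
      (1 / 16 : ℝ≥0∞) * (n : ℝ≥0∞)⁻¹ * μ (⋃ p ∈ J, Set.Icc (p.1 - p.2) (p.1 + p.2)) ≤
        μ (⋃ p ∈ J,
          Set.Icc (p.1 - (8 * n : ℝ)⁻¹ * p.2) (p.1 + (8 * n : ℝ)⁻¹ * p.2)) ∧
      μ (U \ ⋃ p ∈ J, Set.Icc (p.1 - p.2) (p.1 + p.2)) = 0 := by
  have hn' : (0:ℝ) < n := Nat.cast_pos.2 hn
  set τ : ℝ := (8 * n : ℝ)⁻¹ with hτdef
  have hτ0 : 0 < τ := by positivity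
  have hτ1 : τ < 1 := by
    have h1n : (1:ℝ) ≤ n := Nat.one_le_cast.2 hn
    rw [hτdef, inv_lt_one_iff₀]; right; linarith
  set c : ℝ≥0∞ := (1 / 16 : ℝ≥0∞) * (n : ℝ≥0∞)⁻¹ with hcdef
  have hc : c ≤ ENNReal.ofReal (τ * 2⁻¹) := by
    have h1 : τ * 2⁻¹ = (16 * (n:ℝ))⁻¹ := by
      rw [hτdef]; field_simp; ring
    rw [hcdef, h1, ENNReal.ofReal_inv_of_pos (by positivity),
      ENNReal.ofReal_mul (by norm_num), ENNReal.ofReal_natCast,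
      ENNReal.mul_inv (Or.inr (ENNReal.natCast_ne_top n)) (Or.inl (by norm_num)),
      one_div]
    norm_num
  set A := {x : ℝ | ∃ ε > 0, ∀ r : ℝ, 0 < r → r ≤ ε →
      μ (closedBall x (τ * r)) < c * μ (closedBall x r)} with hA
  have hA0 : μ A = 0 := bad_null μ hτ0 hτ1 hc
  set s := U \ A with hs
  set f : ℝ → Set ℝ := fun x =>
    {r | 0 < r ∧ r ≤ r₀ ∧ closedBall x r ⊆ U ∧
      c * μ (closedBall x r) ≤ μ (closedBall x (τ * r))} with hf
  have hfx : ∀ x ∈ s, ∀ δ > 0, (f x ∩ Set.Ioo 0 δ).Nonempty := by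
    rintro x ⟨hxU, hxA⟩ δ hδ
    obtain ⟨d, hd, hball⟩ := Metric.isOpen_iff.1 hU x hxU
    have hxA' : ∀ ε > 0, ∃ r : ℝ, 0 < r ∧ r ≤ ε ∧
        c * μ (closedBall x r) ≤ μ (closedBall x (τ * r)) := by
      intro ε hε
      by_contra h
      push_neg at h
      exact hxA ⟨ε, hε, h⟩
    obtain ⟨r, hr0, hrle, hrgood⟩ := hxA' (min (min r₀ (δ/2)) (d/2))
      (by positivity)
    have h1 : r ≤ r₀ := hrle.trans ((min_le_left _ _).trans (min_le_left _ _))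
    have h2 : r < δ := lt_of_le_of_lt (hrle.trans ((min_le_left _ _).trans (min_le_right _ _)))
      (by linarith)
    have h3 : closedBall x r ⊆ U := by
      refine subset_trans (closedBall_subset_ball ?_) hball
      have := hrle.trans (min_le_right _ _)
      linarith
    exact ⟨r, ⟨hr0, h1, h3, hrgood⟩, hr0, h2⟩
  obtain ⟨t, r, t_count, t_sub, hrr, hcov, t_disj⟩ :=
    Besicovitch.exists_disjoint_closedBall_covering_ae μ f s hfx (fun _ => 1)
      (fun _ _ => one_pos)
  refine ⟨(fun a => (a, r a)) '' t, t_count.image _, ?_, ?_, ?_, ?_⟩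
  · rintro p ⟨a, ha, rfl⟩
    obtain ⟨h0, h1, h2, _⟩ := (hrr a ha).1
    exact ⟨h0, h1, by rwa [← Real.closedBall_eq_Icc]⟩
  · rintro p ⟨a, ha, rfl⟩ q ⟨b, hb, rfl⟩ hpq
    have hab : a ≠ b := fun h => hpq (by rw [h])
    have hd := t_disj ha hb hab
    have hd' : Disjoint (closedBall a (r a)) (closedBall b (r b)) := hd
    have h1 : Set.Ioo (a - r a) (a + r a) ⊆ closedBall a (r a) := by
      rw [Real.closedBall_eq_Icc]; exact Set.Ioo_subset_Icc_self
    have h2 : Set.Ioo (b - r b) (b + r b) ⊆ closedBall b (r b) := by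
      rw [Real.closedBall_eq_Icc]; exact Set.Ioo_subset_Icc_self
    exact hd'.mono h1 h2
  · -- measure inequality
    have hbig : (⋃ p ∈ (fun a => (a, r a)) '' t, Set.Icc (p.1 - p.2) (p.1 + p.2)) =
        ⋃ a ∈ t, closedBall a (r a) := by
      rw [Set.biUnion_image]
      simp only [Real.closedBall_eq_Icc]
    have hsmall : (⋃ p ∈ (fun a => (a, r a)) '' t,
        Set.Icc (p.1 - (8 * n : ℝ)⁻¹ * p.2) (p.1 + (8 * n : ℝ)⁻¹ * p.2)) =
        ⋃ a ∈ t, closedBall a (τ * r a) := by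
      rw [Set.biUnion_image]
      simp only [Real.closedBall_eq_Icc, hτdef]
    rw [hbig, hsmall]
    have hsub2 : ∀ a : ℝ, closedBall a (τ * r a) ⊆ closedBall a (r a) := by
      intro a
      rcases le_or_gt 0 (r a) with h | h
      · exact closedBall_subset_closedBall (by nlinarith)
      · rw [closedBall_eq_empty.2 (by nlinarith : τ * r a < 0)]
        exact Set.empty_subset _
    calc c * μ (⋃ a ∈ t, closedBall a (r a))
        ≤ c * ∑' a : t, μ (closedBall (a:ℝ) (r a)) :=
          mul_le_mul_right (measure_biUnion_le μ t_count _) _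
      _ = ∑' a : t, c * μ (closedBall (a:ℝ) (r a)) := ENNReal.tsum_mul_left.symm
      _ ≤ ∑' a : t, μ (closedBall (a:ℝ) (τ * r a)) :=
          ENNReal.tsum_le_tsum fun a => (hrr a a.2).1.2.2.2
      _ = μ (⋃ a ∈ t, closedBall a (τ * r a)) :=
          (measure_biUnion t_count (t_disj.mono_on fun a _ => hsub2 a)
            fun a _ => measurableSet_closedBall).symm
  · -- null complement
    have hbig : (⋃ p ∈ (fun a => (a, r a)) '' t, Set.Icc (p.1 - p.2) (p.1 + p.2)) =
        ⋃ a ∈ t, closedBall a (r a) := by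
      rw [Set.biUnion_image]
      simp only [Real.closedBall_eq_Icc]
    rw [hbig]
    have : U \ ⋃ a ∈ t, closedBall a (r a) ⊆
        A ∪ (s \ ⋃ a ∈ t, closedBall a (r a)) := by
      rintro x ⟨hxU, hxn⟩
      by_cases hxA : x ∈ A
      · exact Or.inl hxA
      · exact Or.inr ⟨⟨hxU, hxA⟩, hxn⟩
    exact measure_mono_null this (measure_union_null hA0 hcov)
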